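/- Let X be Polish, H ⊆ C_b(X) a linear subspace containing constants, μ0 a Borel probability measure, Q = {μ : ∫ h dμ = ∫ h dμ0 for all h ∈ H}, β a differentiable nondecreasing convex penalty function whose conjugate is β*, γ > 0, β_γ(x) = β(γx)/γ, β*_γ(y) = β*(y)/γ, and θ a Borel probability measure such that some π ∈ Q satisfies π ≪ θ and ∫ β*(dπ/dθ) dθ < ∞. Fix f ∈ C_b(X). If ĥ ∈ H minimizes h ↦ ∫ h dμ0 + ∫ β_γ(f − h) dθ over H, then the probability measure μ̂ defined by dμ̂/dθ = β_γ′(f − ĥ) is a maximizer of μ ↦ ∫ f dμ − (1/γ)∫ β*(dμ/dθ) dθ over Q; in particular φ_{θ,γ}(f) = ∫ f dμ̂ − (1/γ)∫ β*(dμ̂/dθ) dθ. -/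

import Mathlib

open MeasureTheory BoundedContinuousFunction Filter Topology

/-- Convex conjugate `β*(y) = sup_{x ∈ ℝ} (x*y - β x)`. -/
noncomputable def betaConj (β : ℝ → ℝ) (y : ℝ) : ℝ :=
  sSup {z : ℝ | ∃ x : ℝ, z = x * y - β x}

/-- The superhedging functional `φ(f) = inf {∫ h dμ0 : h ∈ H, h ≥ f}`. -/
noncomputable def phi {X : Type*} [TopologicalSpace X] [MeasurableSpace X]
    (μ0 : Measure X) (H : Set (X →ᵇ ℝ)) (f : X →ᵇ ℝ) : ℝ :=
  sInf {r : ℝ | ∃ h ∈ H, (∀ x, f x ≤ h x) ∧ r = ∫ x, h x ∂μ0}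

/-- The regularized (penalized) superhedging functional
`φ_{θ,γ}(f) = inf_{h ∈ H} { ∫ h dμ0 + ∫ β_γ(f - h) dθ }` with `β_γ(x) = β(γ x)/γ`. -/
noncomputable def phiReg {X : Type*} [TopologicalSpace X] [MeasurableSpace X]
    (μ0 θ : Measure X) (H : Set (X →ᵇ ℝ)) (β : ℝ → ℝ) (γ : ℝ) (f : X →ᵇ ℝ) : ℝ :=
  sInf {r : ℝ | ∃ h ∈ H, r = (∫ x, h x ∂μ0) + ∫ x, β (γ * (f x - h x)) / γ ∂θ}

/-- `μ ∈ Q` iff `μ` is a Borel probability measure with `∫ h dμ = ∫ h dμ0` for all `h ∈ H`. -/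
def memQ {X : Type*} [TopologicalSpace X] [MeasurableSpace X]
    (μ0 : Measure X) (H : Set (X →ᵇ ℝ)) (μ : Measure X) : Prop :=
  IsProbabilityMeasure μ ∧ ∀ h ∈ H, ∫ x, h x ∂μ = ∫ x, h x ∂μ0

section Helpers

variable {β : ℝ → ℝ}

lemma tangent_le (hconv : ConvexOn ℝ Set.univ β) (hdiff : Differentiable ℝ β) (u y : ℝ) :
    deriv β u * (y - u) ≤ β y - β u := by
  rcases lt_trichotomy u y with h | rfl | h
  · have := hconv.deriv_le_slope (Set.mem_univ u) (Set.mem_univ y) h (hdiff u)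
    rw [slope_def_field] at this
    have h' : (0:ℝ) < y - u := by linarith
    calc deriv β u * (y - u) ≤ (β y - β u) / (y - u) * (y - u) :=
          mul_le_mul_of_nonneg_right this h'.le
      _ = β y - β u := by field_simp
  · simp
  · have := hconv.slope_le_deriv (Set.mem_univ y) (Set.mem_univ u) h (hdiff u)
    rw [slope_def_field] at this
    have h' : (0:ℝ) < u - y := by linarith
    have := (div_le_iff₀ h').mp this
    nlinarith

lemma deriv_mono (hconv : ConvexOn ℝ Set.univ β) (hdiff : Differentiable ℝ β) :
    Monotone (deriv β) := fun x y hxy =>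
  hconv.monotoneOn_deriv (fun z _ => hdiff z) (Set.mem_univ x) (Set.mem_univ y) hxy

lemma deriv_nonneg' (hconv : ConvexOn ℝ Set.univ β) (hdiff : Differentiable ℝ β)
    (hmono : Monotone β) (u : ℝ) : 0 ≤ deriv β u := by
  have := tangent_le hconv hdiff u (u - 1)
  have h2 : β (u - 1) ≤ β u := hmono (by linarith)
  nlinarith

lemma betaConj_bddAbove (hβ0 : ∀ x, 0 ≤ β x)
    (hsl : Tendsto (fun x => β x / x) atTop atTop) {y : ℝ} (hy : 0 ≤ y) :
    BddAbove {z : ℝ | ∃ x : ℝ, z = x * y - β x} := by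
  obtain ⟨a, ha⟩ := (hsl.eventually_ge_atTop (y + 1)).exists_forall_of_atTop
  set M := max a 1 with hM
  refine ⟨M * y, ?_⟩
  rintro z ⟨x, rfl⟩
  rcases le_or_gt x M with hx | hx
  · have : x * y ≤ M * y := mul_le_mul_of_nonneg_right hx hy
    have := hβ0 x
    linarith
  · have hx1 : (1:ℝ) ≤ x := le_trans (le_max_right a 1) hx.le
    have hxa : a ≤ x := le_trans (le_max_left a 1) hx.le
    have hsl' : y + 1 ≤ β x / x := ha x hxa
    have hx0 : (0:ℝ) < x := by linarith
    have : (y + 1) * x ≤ β x := by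
      have := mul_le_mul_of_nonneg_right hsl' hx0.le
      rwa [div_mul_cancel₀ _ hx0.ne'] at this
    have hMy : 0 ≤ M * y := mul_nonneg (le_trans zero_le_one (le_max_right a 1)) hy
    nlinarith

lemma fenchel_young (hβ0 : ∀ x, 0 ≤ β x)
    (hsl : Tendsto (fun x => β x / x) atTop atTop) {y : ℝ} (hy : 0 ≤ y) (x : ℝ) :
    x * y - β x ≤ betaConj β y :=
  le_csSup (betaConj_bddAbove hβ0 hsl hy) ⟨x, rfl⟩

lemma betaConj_deriv (hconv : ConvexOn ℝ Set.univ β) (hdiff : Differentiable ℝ β)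
    (hmono : Monotone β) (hβ0 : ∀ x, 0 ≤ β x)
    (hsl : Tendsto (fun x => β x / x) atTop atTop) (u : ℝ) :
    betaConj β (deriv β u) = u * deriv β u - β u := by
  refine le_antisymm (csSup_le ⟨u * deriv β u - β u, u, rfl⟩ ?_)
    (fenchel_young hβ0 hsl (deriv_nonneg' hconv hdiff hmono u) u)
  rintro z ⟨x, rfl⟩
  have := tangent_le hconv hdiff u x
  nlinarith

lemma integrable_of_bdd {X : Type*} [TopologicalSpace X] [MeasurableSpace X]
    [OpensMeasurableSpace X] {θ : Measure X} [IsFiniteMeasure θ]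
    {u : X → ℝ} (hc : Continuous u) (C : ℝ) (hb : ∀ x, |u x| ≤ C) : Integrable u θ :=
  Integrable.mono' (integrable_const C) hc.aestronglyMeasurable
    (Filter.Eventually.of_forall fun x => by simpa [Real.norm_eq_abs] using hb x)

end Helpers

lemma foc {X : Type*} [TopologicalSpace X] [MeasurableSpace X] [OpensMeasurableSpace X]
    (μ0 θ : Measure X) [IsProbabilityMeasure μ0] [IsProbabilityMeasure θ]
    {β : ℝ → ℝ} (hβ0 : ∀ x, 0 ≤ β x) (hβdiff : Differentiable ℝ β)
    (hβmono : Monotone β) (hβconv : ConvexOn ℝ Set.univ β)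
    {γ : ℝ} (hγ : 0 < γ) (f hhat h : X →ᵇ ℝ)
    (hle : ∀ c : ℝ, 0 < c → c ≤ 1 →
      (∫ x, β (γ * (f x - hhat x)) / γ ∂θ) - (∫ x, β (γ * (f x - hhat x) - γ * c * h x) / γ ∂θ)
        ≤ c * ∫ x, h x ∂μ0) :
    ∫ x, deriv β (γ * (f x - hhat x)) * h x ∂θ ≤ ∫ x, h x ∂μ0 := by
  set A : X → ℝ := fun x => γ * (f x - hhat x) with hA
  have hAcont : Continuous A := by
    apply Continuous.mul continuous_const (f.continuous.sub hhat.continuous)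
  set R : ℝ := γ * (‖f‖ + ‖hhat‖ + ‖h‖) with hR
  have hfb : ∀ x, |f x| ≤ ‖f‖ := fun x => f.norm_coe_le_norm x
  have hhb : ∀ x, |hhat x| ≤ ‖hhat‖ := fun x => hhat.norm_coe_le_norm x
  have hgb : ∀ x, |h x| ≤ ‖h‖ := fun x => h.norm_coe_le_norm x
  have hAbd : ∀ x, |A x| ≤ R := by
    intro x
    rw [hA, hR, abs_mul, abs_of_pos hγ]
    have := abs_sub (f x) (hhat x)
    have h1 := hfb x; have h2 := hhb x; have h3 := abs_nonneg (h x)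
    have h4 : (0:ℝ) ≤ ‖h‖ := norm_nonneg h
    have := abs_sub_abs_le_abs_sub (f x) (hhat x)
    have h5 : |f x - hhat x| ≤ |f x| + |hhat x| := abs_sub _ _
    nlinarith
  have hdn : ∀ u, 0 ≤ deriv β u := deriv_nonneg' hβconv hβdiff hβmono
  have hdmono := deriv_mono hβconv hβdiff
  have hdbd : ∀ v : ℝ, |v| ≤ R → |deriv β v| ≤ deriv β R := by
    intro v hv
    rw [abs_of_nonneg (hdn v)]
    exact hdmono (le_trans (le_abs_self v) hv)
  -- the difference quotients
  set c : ℕ → ℝ := fun n => ((n:ℝ) + 1)⁻¹ with hc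
  have hcpos : ∀ n, 0 < c n := fun n => by positivity
  have hcle1 : ∀ n, c n ≤ 1 := fun n => by
    rw [hc]; rw [inv_le_one_iff₀]; right; push_cast; linarith [Nat.cast_nonneg (α := ℝ) n]
  set g : ℕ → X → ℝ := fun n x => (β (A x) - β (A x - γ * c n * h x)) * ((n:ℝ) + 1) / γ
    with hg
  -- bounds for arguments
  have hargbd : ∀ n x, |A x - γ * c n * h x| ≤ R + γ * ‖h‖ := by
    intro n x
    have h1 := hAbd x
    have h2 : |γ * c n * h x| ≤ γ * ‖h‖ := by
      rw [abs_mul, abs_mul, abs_of_pos hγ, abs_of_pos (hcpos n)]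
      have := hgb x
      have h3 : γ * c n ≤ γ * 1 := by
        apply mul_le_mul_of_nonneg_left (hcle1 n) hγ.le
      nlinarith [(hcpos n).le, abs_nonneg (h x), norm_nonneg h]
    calc |A x - γ * c n * h x| ≤ |A x| + |γ * c n * h x| := abs_sub _ _
      _ ≤ R + γ * ‖h‖ := add_le_add h1 h2
  set R' : ℝ := R + γ * ‖h‖ with hR'
  have hRR' : R ≤ R' := by rw [hR']; nlinarith [norm_nonneg h]
  -- domination
  have hdom : ∀ n x, |g n x| ≤ deriv β R' * ‖h‖ := by
    intro n x
    set s : ℝ := γ * c n * h x with hs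
    have hA1 : |A x| ≤ R' := le_trans (hAbd x) hRR'
    have hA2 : |A x - s| ≤ R' := hargbd n x
    have t1 := tangent_le hβconv hβdiff (A x) (A x - s)
    have t2 := tangent_le hβconv hβdiff (A x - s) (A x)
    -- t1 : deriv β (A x) * ((A x - s) - A x) ≤ β (A x - s) - β (A x)
    -- t2 : deriv β (A x - s) * (A x - (A x - s)) ≤ β (A x) - β (A x - s)
    have hb1 : |deriv β (A x) * s| ≤ deriv β R' * |s| := by
      rw [abs_mul]
      exact mul_le_mul_of_nonneg_right (by
        rw [abs_of_nonneg (hdn _)]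
        exact hdmono (le_trans (le_abs_self _) hA1)) (abs_nonneg s)
    have hb2 : |deriv β (A x - s) * s| ≤ deriv β R' * |s| := by
      rw [abs_mul]
      exact mul_le_mul_of_nonneg_right (by
        rw [abs_of_nonneg (hdn _)]
        exact hdmono (le_trans (le_abs_self _) hA2)) (abs_nonneg s)
    have hΔ : |β (A x) - β (A x - s)| ≤ deriv β R' * |s| := by
      rw [abs_le]
      constructor
      · have := neg_abs_le (deriv β (A x - s) * s)
        nlinarith [abs_nonneg s]
      · have := le_abs_self (deriv β (A x) * s)
        nlinarith [abs_nonneg s]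
    have hseq : |s| ≤ γ * c n * ‖h‖ := by
      rw [hs, abs_mul, abs_mul, abs_of_pos hγ, abs_of_pos (hcpos n)]
      exact mul_le_mul_of_nonneg_left (hgb x) (by positivity)
    have hgn : |g n x| = |β (A x) - β (A x - s)| * ((n:ℝ)+1) / γ := by
      rw [hg]
      rw [abs_div, abs_mul, abs_of_pos hγ, abs_of_pos (show (0:ℝ) < (n:ℝ)+1 by positivity)]
    rw [hgn]
    have hcn : c n * ((n:ℝ)+1) = 1 := by
      rw [hc]; field_simp
    have hd' : 0 ≤ deriv β R' := hdn _
    calc |β (A x) - β (A x - s)| * ((n:ℝ)+1) / γ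
        ≤ deriv β R' * (γ * c n * ‖h‖) * ((n:ℝ)+1) / γ := by
          gcongr
          exact le_trans hΔ (mul_le_mul_of_nonneg_left hseq hd')
      _ = deriv β R' * ‖h‖ * (c n * ((n:ℝ)+1)) := by field_simp
      _ = deriv β R' * ‖h‖ := by rw [hcn, mul_one]
  have hβc : Continuous β := hβdiff.continuous
  have hcmul : ∀ n : ℕ, c n * ((n:ℝ)+1) = 1 := by
    intro n; rw [hc]; field_simp
  -- integrability of the pieces
  have hint1 : Integrable (fun x => β (A x) / γ) θ := by
    refine integrable_of_bdd ?_ (β R' / γ) ?_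
    · exact (hβc.comp hAcont).div_const γ
    intro x
    rw [abs_div, abs_of_pos hγ, abs_of_nonneg (hβ0 _)]
    have hle' : β (A x) ≤ β R' := hβmono (le_trans (le_abs_self _) ((hAbd x).trans hRR'))
    gcongr
  have hint2 : ∀ n, Integrable (fun x => β (A x - γ * c n * h x) / γ) θ := by
    intro n
    refine integrable_of_bdd ?_ (β R' / γ) ?_
    · exact (hβc.comp (hAcont.sub (continuous_const.mul h.continuous))).div_const γ
    intro x
    rw [abs_div, abs_of_pos hγ, abs_of_nonneg (hβ0 _)]
    have hle' : β (A x - γ * c n * h x) ≤ β R' := hβmono (le_trans (le_abs_self _) (hargbd n x))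
    gcongr
  have hgcont : ∀ n, Continuous (g n) := by
    intro n
    exact (((hβc.comp hAcont).sub (hβc.comp (hAcont.sub
      (continuous_const.mul h.continuous)))).mul continuous_const).div_const γ
  -- step (i): each integral is ≤ ∫ h dμ0
  have key1 : ∀ n, ∫ x, g n x ∂θ ≤ ∫ x, h x ∂μ0 := by
    intro n
    have hstep : (∫ x, β (A x) / γ ∂θ) - (∫ x, β (A x - γ * c n * h x) / γ ∂θ)
        ≤ c n * ∫ x, h x ∂μ0 := hle (c n) (hcpos n) (hcle1 n)
    have hgeq : ∫ x, g n x ∂θ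
        = ((n:ℝ)+1) * ((∫ x, β (A x) / γ ∂θ) - ∫ x, β (A x - γ * c n * h x) / γ ∂θ) := by
      rw [← integral_sub hint1 (hint2 n), ← integral_const_mul]
      congr 1; funext x
      ring
    rw [hgeq]
    have := mul_le_mul_of_nonneg_left hstep (show (0:ℝ) ≤ (n:ℝ)+1 by positivity)
    calc ((n:ℝ)+1) * ((∫ x, β (A x) / γ ∂θ) - ∫ x, β (A x - γ * c n * h x) / γ ∂θ)
        ≤ ((n:ℝ)+1) * (c n * ∫ x, h x ∂μ0) := this
      _ = (c n * ((n:ℝ)+1)) * ∫ x, h x ∂μ0 := by ring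
      _ = ∫ x, h x ∂μ0 := by rw [hcmul n, one_mul]
  -- step (ii): convergence of integrals
  have key2 : Tendsto (fun n => ∫ x, g n x ∂θ) atTop
      (𝓝 (∫ x, deriv β (A x) * h x ∂θ)) := by
    apply tendsto_integral_of_dominated_convergence (fun _ => deriv β R' * ‖h‖)
    · intro n; exact (hgcont n).aestronglyMeasurable
    · exact integrable_const _
    · intro n
      exact Filter.Eventually.of_forall fun x => by
        simpa [Real.norm_eq_abs] using hdom n x
    · apply Filter.Eventually.of_forall
      intro x
      have hinner : HasDerivAt (fun t : ℝ => A x - γ * t * h x) (-(γ * h x)) 0 := by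
        have h1 : HasDerivAt (fun t : ℝ => γ * t * h x) (γ * h x) 0 := by
          simpa using (((hasDerivAt_id (0:ℝ)).const_mul γ).mul_const (h x))
        simpa using h1.const_sub (A x)
      have hFd : HasDerivAt (fun t : ℝ => β (A x - γ * t * h x))
          (deriv β (A x) * -(γ * h x)) 0 := by
        have hcomp := ((hβdiff (A x - γ * (0:ℝ) * h x)).hasDerivAt).comp (0:ℝ) hinner
        simpa [Function.comp_def] using hcomp
      rw [hasDerivAt_iff_tendsto_slope] at hFd
      have hcn0 : Tendsto c atTop (𝓝[≠] (0:ℝ)) := by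
        apply tendsto_nhdsWithin_of_tendsto_nhds_of_eventually_within
        · have := tendsto_one_div_add_atTop_nhds_zero_nat (𝕜 := ℝ)
          simpa [hc, one_div] using this
        · exact Filter.Eventually.of_forall fun n => (hcpos n).ne'
      have hslope := hFd.comp hcn0
      have heq : ∀ n, g n x
          = -(slope (fun t : ℝ => β (A x - γ * t * h x)) (0:ℝ) (c n)) / γ := by
        intro n
        rw [slope_def_field]
        have hc0 : c n ≠ 0 := (hcpos n).ne'
        have hn0 : ((n:ℝ)+1) ≠ 0 := by positivity
        simp only [mul_zero, zero_mul, sub_zero]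
        simp only [hg, hc]
        rw [div_inv_eq_mul]
        ring
      have hlim := (hslope.neg).div_const γ
      have hval : -(deriv β (A x) * -(γ * h x)) / γ = deriv β (A x) * h x := by
        field_simp
      rw [hval] at hlim
      exact Tendsto.congr (fun n => (heq n).symm) hlim
  exact le_of_tendsto key2 (Filter.Eventually.of_forall key1)

/-- If `ĥ ∈ H` minimizes `h ↦ ∫ h dμ0 + ∫ β_γ(f - h) dθ` over `H`, then the
probability measure `μ̂` with `dμ̂/dθ = β_γ′(f - ĥ) = β′(γ(f - ĥ))` is a maximizer of
`μ ↦ ∫ f dμ - (1/γ) ∫ β*(dμ/dθ) dθ` over `Q`; in particular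
`φ_{θ,γ}(f) = ∫ f dμ̂ - (1/γ) ∫ β*(dμ̂/dθ) dθ`. -/
theorem statement5 {X : Type*} [TopologicalSpace X] [PolishSpace X]
    [MeasurableSpace X] [BorelSpace X]
    (μ0 θ : Measure X) [IsProbabilityMeasure μ0] [IsProbabilityMeasure θ]
    (H : Submodule ℝ (X →ᵇ ℝ))
    (hconst : ∀ c : ℝ, BoundedContinuousFunction.const X c ∈ H)
    (β : ℝ → ℝ) (hβ0 : ∀ x, 0 ≤ β x) (hβdiff : Differentiable ℝ β)
    (hβmono : Monotone β) (hβconv : ConvexOn ℝ Set.univ β)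
    (hβsl : Tendsto (fun x => β x / x) atTop atTop)
    (γ : ℝ) (hγ : 0 < γ)
    (π : Measure X) (hπQ : memQ μ0 (H : Set (X →ᵇ ℝ)) π) (hπac : π ≪ θ)
    (hπint : Integrable (fun x => betaConj β ((π.rnDeriv θ x).toReal)) θ)
    (f : X →ᵇ ℝ)
    (hhat : X →ᵇ ℝ) (hhatH : hhat ∈ H)
    (hmin : ∀ h ∈ H,
      (∫ x, hhat x ∂μ0) + ∫ x, β (γ * (f x - hhat x)) / γ ∂θ ≤
        (∫ x, h x ∂μ0) + ∫ x, β (γ * (f x - h x)) / γ ∂θ) :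
    memQ μ0 (H : Set (X →ᵇ ℝ))
        (θ.withDensity fun x => ENNReal.ofReal (deriv β (γ * (f x - hhat x)))) ∧
      phiReg μ0 θ (H : Set (X →ᵇ ℝ)) β γ f =
        (∫ x, f x ∂(θ.withDensity fun x => ENNReal.ofReal (deriv β (γ * (f x - hhat x))))) -
          (1 / γ) * ∫ x, betaConj β (deriv β (γ * (f x - hhat x))) ∂θ ∧
      ∀ μ : Measure X, memQ μ0 (H : Set (X →ᵇ ℝ)) μ → μ ≪ θ →
        Integrable (fun x => betaConj β ((μ.rnDeriv θ x).toReal)) θ →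
        (∫ x, f x ∂μ) - (1 / γ) * ∫ x, betaConj β ((μ.rnDeriv θ x).toReal) ∂θ ≤
          (∫ x, f x ∂(θ.withDensity fun x => ENNReal.ofReal (deriv β (γ * (f x - hhat x))))) -
            (1 / γ) * ∫ x, betaConj β (deriv β (γ * (f x - hhat x))) ∂θ := by
  have hβc : Continuous β := hβdiff.continuous
  have hdn : ∀ u, 0 ≤ deriv β u := deriv_nonneg' hβconv hβdiff hβmono
  have hdmono := deriv_mono hβconv hβdiff
  set D : X → ℝ := fun x => deriv β (γ * (f x - hhat x)) with hDdef
  set A : X → ℝ := fun x => γ * (f x - hhat x) with hAdef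
  have hAcont : Continuous A := continuous_const.mul (f.continuous.sub hhat.continuous)
  have hAbd : ∀ x, |A x| ≤ γ * (‖f‖ + ‖hhat‖) := by
    intro x
    rw [hAdef, abs_mul, abs_of_pos hγ]
    have h1 : |f x| ≤ ‖f‖ := f.norm_coe_le_norm x
    have h2 : |hhat x| ≤ ‖hhat‖ := hhat.norm_coe_le_norm x
    have h5 : |f x - hhat x| ≤ |f x| + |hhat x| := abs_sub _ _
    exact mul_le_mul_of_nonneg_left (le_trans h5 (add_le_add h1 h2)) hγ.le
  set R : ℝ := γ * (‖f‖ + ‖hhat‖) with hRdef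
  have hDbd : ∀ x, |D x| ≤ deriv β R := by
    intro x
    rw [hDdef, abs_of_nonneg (hdn _)]
    exact hdmono (le_trans (le_abs_self _) (hAbd x))
  have hDmeas : Measurable D := (measurable_deriv β).comp hAcont.measurable
  have hDint : Integrable D θ :=
    Integrable.mono' (integrable_const (deriv β R)) hDmeas.aestronglyMeasurable
      (Filter.Eventually.of_forall fun x => by simpa [Real.norm_eq_abs] using hDbd x)
  have hDmul_int : ∀ u : X →ᵇ ℝ, Integrable (fun x => D x * u x) θ := by
    intro u
    refine Integrable.mono' (integrable_const (deriv β R * ‖u‖))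
      (hDmeas.mul u.continuous.measurable).aestronglyMeasurable
      (Filter.Eventually.of_forall fun x => ?_)
    rw [Real.norm_eq_abs, abs_mul]
    have hu : |u x| ≤ ‖u‖ := u.norm_coe_le_norm x
    exact mul_le_mul (hDbd x) hu (abs_nonneg _) (hdn R)
  have hβA_int : Integrable (fun x => β (A x)) θ := by
    refine Integrable.mono' (integrable_const (β R)) (hβc.comp hAcont).aestronglyMeasurable
      (Filter.Eventually.of_forall fun x => ?_)
    rw [Real.norm_eq_abs, abs_of_nonneg (hβ0 _)]
    exact hβmono (le_trans (le_abs_self _) (hAbd x))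
  -- the first-order condition
  have hfoc : ∀ h : X →ᵇ ℝ, h ∈ H → ∫ x, D x * h x ∂θ = ∫ x, h x ∂μ0 := by
    have haux : ∀ h : X →ᵇ ℝ, h ∈ H → ∫ x, D x * h x ∂θ ≤ ∫ x, h x ∂μ0 := by
      intro h hH
      apply foc μ0 θ hβ0 hβdiff hβmono hβconv hγ f hhat h
      intro c hc0 hc1
      have hmem : hhat + c • h ∈ H := H.add_mem hhatH (H.smul_mem c hH)
      have hmin' := hmin _ hmem
      have e1 : ∫ x, (hhat + c • h) x ∂μ0 = (∫ x, hhat x ∂μ0) + c * ∫ x, h x ∂μ0 := by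
        simp only [BoundedContinuousFunction.coe_add, BoundedContinuousFunction.coe_smul,
          Pi.add_apply, Pi.smul_apply, smul_eq_mul]
        rw [integral_add (hhat.integrable μ0) ((h.integrable μ0).const_mul c),
          integral_const_mul]
      have e2 : (fun x => β (γ * (f x - (hhat + c • h) x)) / γ)
          = fun x => β (γ * (f x - hhat x) - γ * c * h x) / γ := by
        funext x
        simp only [BoundedContinuousFunction.coe_add, BoundedContinuousFunction.coe_smul,
          Pi.add_apply, Pi.smul_apply, smul_eq_mul]
        congr 2
        ring
      rw [e1, e2] at hmin'
      linarith
    intro h hH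
    have h1 := haux h hH
    have h2 := haux (-h) (H.neg_mem hH)
    have e1 : ∫ x, D x * (-h) x ∂θ = -∫ x, D x * h x ∂θ := by
      simp only [BoundedContinuousFunction.coe_neg, Pi.neg_apply, mul_neg]
      exact integral_neg _
    have e2 : ∫ x, (-h) x ∂μ0 = -∫ x, h x ∂μ0 := by
      simp only [BoundedContinuousFunction.coe_neg, Pi.neg_apply]
      exact integral_neg _
    rw [e1, e2] at h2
    linarith
  -- integral of D is 1
  have hD1 : ∫ x, D x ∂θ = 1 := by
    have := hfoc (BoundedContinuousFunction.const X 1) (hconst 1)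
    simpa using this
  -- the candidate measure
  set μhat : Measure X := θ.withDensity fun x => ENNReal.ofReal (D x) with hμhat
  -- integrals against μhat
  have hμhat_int : ∀ u : X →ᵇ ℝ, ∫ x, u x ∂μhat = ∫ x, D x * u x ∂θ := by
    intro u
    have hte : (fun x => ENNReal.ofReal (D x))
        = fun x => ((Real.toNNReal (D x) : NNReal) : ENNReal) := rfl
    rw [hμhat, hte, integral_withDensity_eq_integral_smul hDmeas.real_toNNReal]
    apply integral_congr_ae
    apply Filter.Eventually.of_forall
    intro x
    simp [NNReal.smul_def, Real.coe_toNNReal _ (hdn _)]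
    exact Or.inl (hdn _)
  have hprob : IsProbabilityMeasure μhat := by
    constructor
    rw [hμhat, withDensity_apply _ MeasurableSet.univ, Measure.restrict_univ,
      ← ofReal_integral_eq_lintegral_ofReal hDint
        (Filter.Eventually.of_forall fun x => hdn _), hD1, ENNReal.ofReal_one]
  have hmemQ : memQ μ0 (H : Set (X →ᵇ ℝ)) μhat := by
    refine ⟨hprob, fun h hH => ?_⟩
    rw [hμhat_int h, hfoc h hH]
  -- the common value
  set V : ℝ := (∫ x, hhat x ∂μ0) + ∫ x, β (γ * (f x - hhat x)) / γ ∂θ with hV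
  have hval : (∫ x, f x ∂μhat) - (1 / γ) * ∫ x, betaConj β (D x) ∂θ = V := by
    have hconj : ∀ x, betaConj β (D x) = A x * D x - β (A x) := fun x =>
      betaConj_deriv hβconv hβdiff hβmono hβ0 hβsl (A x)
    have e : (fun x => betaConj β (D x))
        = fun x => γ * (D x * f x) - γ * (D x * hhat x) - β (A x) := by
      funext x
      rw [hconj x, hAdef]
      ring
    have i1 : Integrable (fun x => γ * (D x * f x)) θ := (hDmul_int f).const_mul γ
    have i2 : Integrable (fun x => γ * (D x * hhat x)) θ := (hDmul_int hhat).const_mul γ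
    have i12 : Integrable (fun x => γ * (D x * f x) - γ * (D x * hhat x)) θ := i1.sub i2
    have e3 : ∫ x, betaConj β (D x) ∂θ
        = γ * (∫ x, D x * f x ∂θ) - γ * (∫ x, D x * hhat x ∂θ) - ∫ x, β (A x) ∂θ := by
      rw [e, integral_sub i12 hβA_int, integral_sub i1 i2, integral_const_mul,
        integral_const_mul]
    have e4 : ∫ x, β (γ * (f x - hhat x)) / γ ∂θ = (∫ x, β (A x) ∂θ) / γ := by
      rw [← integral_div]
    rw [hμhat_int f, e3, hfoc hhat hhatH, hV, e4]
    field_simp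
    ring
  -- phiReg equals V
  have hphi : phiReg μ0 θ (H : Set (X →ᵇ ℝ)) β γ f = V := by
    rw [phiReg]
    apply le_antisymm
    · exact csInf_le ⟨V, by rintro r ⟨h, hH, rfl⟩; exact hmin h hH⟩ ⟨hhat, hhatH, rfl⟩
    · exact le_csInf ⟨V, hhat, hhatH, rfl⟩ (by rintro r ⟨h, hH, rfl⟩; exact hmin h hH)
  refine ⟨hmemQ, by rw [hphi, ← hval], ?_⟩
  -- the maximality part
  intro μ hμQ hac hμint
  haveI := hμQ.1
  rw [show (∫ x, f x ∂(θ.withDensity fun x => ENNReal.ofReal (deriv β (γ * (f x - hhat x))))) -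
      (1 / γ) * ∫ x, betaConj β (deriv β (γ * (f x - hhat x))) ∂θ = V from hval]
  set ρ : X → ℝ := fun x => (μ.rnDeriv θ x).toReal with hρ
  have hρnn : ∀ x, 0 ≤ ρ x := fun x => ENNReal.toReal_nonneg
  have hint1 : Integrable (fun x => ρ x • ((f - hhat) x)) θ :=
    (integrable_rnDeriv_smul_iff hac).mpr ((f - hhat).integrable μ)
  have heq1 : ∫ x, ρ x • ((f - hhat) x) ∂θ = ∫ x, (f - hhat) x ∂μ :=
    integral_rnDeriv_smul hac
  have hpt : ∀ x, ρ x • ((f - hhat) x) ≤ β (A x) / γ + betaConj β (ρ x) / γ := by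
    intro x
    have key : γ * (f x - hhat x) * ρ x - β (γ * (f x - hhat x)) ≤ betaConj β (ρ x) :=
      fenchel_young hβ0 hβsl (hρnn x) _
    simp only [smul_eq_mul, BoundedContinuousFunction.coe_sub, Pi.sub_apply]
    rw [← add_div, le_div_iff₀ hγ]
    have hAx : A x = γ * (f x - hhat x) := rfl
    rw [hAx]
    nlinarith [key]
  have hint2 : Integrable (fun x => β (A x) / γ + betaConj β (ρ x) / γ) θ :=
    (hβA_int.div_const γ).add (hμint.div_const γ)
  have hmono' := integral_mono hint1 hint2 hpt
  rw [heq1, integral_add (hβA_int.div_const γ) (hμint.div_const γ)] at hmono'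
  have e5 : ∫ x, (f - hhat) x ∂μ = (∫ x, f x ∂μ) - ∫ x, hhat x ∂μ := by
    simp only [BoundedContinuousFunction.coe_sub, Pi.sub_apply]
    exact integral_sub (f.integrable μ) (hhat.integrable μ)
  have e6 : ∫ x, hhat x ∂μ = ∫ x, hhat x ∂μ0 := hμQ.2 hhat hhatH
  have e7 : ∫ x, betaConj β (ρ x) / γ ∂θ = (∫ x, betaConj β (ρ x) ∂θ) / γ := integral_div _ _
  have e8 : ∫ x, β (A x) / γ ∂θ = ∫ x, β (γ * (f x - hhat x)) / γ ∂θ := rfl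
  rw [e5, e6, e7, e8] at hmono'
  rw [hV]
  have : (1 / γ) * ∫ x, betaConj β (ρ x) ∂θ = (∫ x, betaConj β (ρ x) ∂θ) / γ := by
    ring
  linarith
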